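/- Let A be an abelian category, (H_i)_{i∈ℤ} a family of objects of A with H_i = 0 for all but finitely many i, and η = (η_i : H_i → H_{i+2})_{i∈ℤ} a family of morphisms; for k ≥ 0 write η^k : H_i → H_{i+2k} for the k-fold composite. Assume that η^k : H_{-k} → H_k is an isomorphism for every k ≥ 0. For i ≥ 0 let P_{-i} := ker(η^{i+1} : H_{-i} → H_{i+2}), with kernel inclusion ι_{-i} : P_{-i} → H_{-i}. Then for every i ≥ 0 the morphisms η^k ∘ ι_{-i-2k} : P_{-i-2k} → H_{-i} (k ≥ 0) exhibit H_{-i} as the (finite) biproduct ⨁_{k≥0} P_{-i-2k}, i.e. the induced morphism from the coproduct is an isomorphism; likewise the morphisms η^{i+k} ∘ ι_{-i-2k} : P_{-i-2k} → H_{i} exhibit H_i as ⨁_{k≥0} P_{-i-2k}. -/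

import Mathlib

open CategoryTheory CategoryTheory.Limits

attribute [local instance] CategoryTheory.Abelian.hasFiniteBiproducts

universe v u

variable {A : Type u} [Category.{v} A] [Abelian A]

/-- Given objects `H i` (`i : ℤ`) and morphisms `η i : H i ⟶ H (i + 2)`, the
`k`-fold composite `η^k : H i ⟶ H j` for `j = i + 2k`. -/
def etaPow (H : ℤ → A) (η : ∀ i : ℤ, H i ⟶ H (i + 2)) :
    ∀ (k : ℕ) (i j : ℤ), j = i + 2 * k → (H i ⟶ H j)
  | 0, i, j, h => eqToHom (congrArg H (by omega : i = j))
  | (k + 1), i, j, h => η i ≫ etaPow H η k (i + 2) j (by omega)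

/-- The primitive object `P_{-m} = ker (η^{m+1} : H_{-m} ⟶ H_{m+2})`. -/
noncomputable def primObj (H : ℤ → A) (η : ∀ i : ℤ, H i ⟶ H (i + 2)) (m : ℕ) : A :=
  kernel (etaPow H η (m + 1) (-(m : ℤ)) ((m : ℤ) + 2) (by push_cast; ring))

/-- The canonical map `η^k ∘ ι : P_{-i-2k} ⟶ H_{-i}`. -/
noncomputable def primToNeg (H : ℤ → A) (η : ∀ i : ℤ, H i ⟶ H (i + 2)) (i k : ℕ) :
    primObj H η (i + 2 * k) ⟶ H (-(i : ℤ)) :=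
  kernel.ι _ ≫ etaPow H η k (-((i + 2 * k : ℕ) : ℤ)) (-(i : ℤ)) (by push_cast; ring)

/-- The canonical map `η^{i+k} ∘ ι : P_{-i-2k} ⟶ H_i`. -/
noncomputable def primToPos (H : ℤ → A) (η : ∀ i : ℤ, H i ⟶ H (i + 2)) (i k : ℕ) :
    primObj H η (i + 2 * k) ⟶ H ((i : ℤ)) :=
  kernel.ι _ ≫ etaPow H η (i + k) (-((i + 2 * k : ℕ) : ℤ)) ((i : ℤ)) (by push_cast; ring)

set_option linter.unusedSectionVars false

section Auxiliary

variable (H : ℤ → A) (η : ∀ i : ℤ, H i ⟶ H (i + 2))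

lemma etaPow_zero (i j : ℤ) (h : j = i + 2 * (0 : ℕ)) :
    etaPow H η 0 i j h = eqToHom (congrArg H (by omega : i = j)) := rfl

lemma etaPow_congr {k k' : ℕ} {i i' j j' : ℤ} (hk : k = k') (hi : i = i') (hj : j = j')
    (h : j = i + 2 * k) :
    etaPow H η k i j h =
      eqToHom (congrArg H hi) ≫ etaPow H η k' i' j' (by omega) ≫
        eqToHom (congrArg H hj.symm) := by
  subst hk hi hj
  simp

lemma etaPow_comp (k l : ℕ) (i j m : ℤ) (h : j = i + 2 * k) (h' : m = j + 2 * l) :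
    etaPow H η k i j h ≫ etaPow H η l j m h' = etaPow H η (k + l) i m (by omega) := by
  induction k generalizing i with
  | zero =>
      obtain rfl : i = j := by omega
      rw [etaPow_zero]
      simp
  | succ k ih =>
      rw [etaPow_congr H η (show k + 1 + l = (k + l) + 1 by omega) rfl rfl]
      simp only [etaPow, Category.assoc, ih]
      simp

lemma isZero_congr {a b : ℤ} (h : a = b) (hz : IsZero (H a)) : IsZero (H b) := h ▸ hz

lemma prim_ι_congr {m m' : ℕ} (h : m = m') :
    eqToHom (congrArg (primObj H η) h) ≫
      kernel.ι (etaPow H η (m' + 1) (-(m' : ℤ)) ((m' : ℤ) + 2) (by push_cast; ring)) =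
    kernel.ι (etaPow H η (m + 1) (-(m : ℤ)) ((m : ℤ) + 2) (by push_cast; ring)) ≫
      eqToHom (congrArg H (by rw [h])) := by
  subst h
  simp
  exact Category.id_comp _

lemma primToNeg_congr (i : ℕ) {k k' : ℕ} (h : k = k')
    (e : primObj H η (i + 2 * k) = primObj H η (i + 2 * k')) :
    eqToHom e ≫ primToNeg H η i k' = primToNeg H η i k := by
  subst h
  simp

lemma primToNeg_succ (i k : ℕ) :
    primToNeg H η (i + 2) k ≫
        etaPow H η 1 (-((i + 2 : ℕ) : ℤ)) (-(i : ℤ)) (by push_cast; ring) =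
      eqToHom (congrArg (primObj H η) (show (i + 2) + 2 * k = i + 2 * (k + 1) by ring)) ≫
        primToNeg H η i (k + 1) := by
  have hm : (i + 2) + 2 * k = i + 2 * (k + 1) := by ring
  unfold primToNeg
  erw [Category.assoc, etaPow_comp H η k 1]
  conv_rhs => erw [← Category.assoc, prim_ι_congr H η hm, Category.assoc]
  congr 1
  rw [etaPow_congr H η rfl (show (-(((i + 2) + 2 * k : ℕ) : ℤ)) =
        (-((i + 2 * (k + 1) : ℕ) : ℤ)) by rw [hm]) rfl]
  simp

lemma primToNeg_succ' (i k : ℕ) {n : ℕ} (hn : n = k + 1)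
    (e : primObj H η ((i + 2) + 2 * k) = primObj H η (i + 2 * n)) :
    eqToHom e ≫ primToNeg H η i n =
      primToNeg H η (i + 2) k ≫
        etaPow H η 1 (-((i + 2 : ℕ) : ℤ)) (-(i : ℤ)) (by push_cast; ring) := by
  subst hn
  rw [primToNeg_succ]

lemma primToNeg_zero_eq (i : ℕ) :
    primToNeg H η i 0 =
      kernel.ι (etaPow H η (i + 2 * 0 + 1) (-((i + 2 * 0 : ℕ) : ℤ))
          (((i + 2 * 0 : ℕ) : ℤ) + 2) (by push_cast; ring)) ≫
        eqToHom (congrArg H (show (-((i + 2 * 0 : ℕ) : ℤ)) = -(i : ℤ) by push_cast; ring)) :=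
  rfl

lemma isIso_primToNeg_zero (i : ℕ) (hz : IsZero (H ((i : ℤ) + 2))) :
    IsIso (primToNeg H η i 0) := by
  rw [primToNeg_zero_eq]
  haveI : IsIso (kernel.ι (etaPow H η (i + 2 * 0 + 1) (-((i + 2 * 0 : ℕ) : ℤ))
      (((i + 2 * 0 : ℕ) : ℤ) + 2) (by push_cast; ring))) := by
    rw [show etaPow H η (i + 2 * 0 + 1) (-((i + 2 * 0 : ℕ) : ℤ))
        (((i + 2 * 0 : ℕ) : ℤ) + 2) (by push_cast; ring) = 0 from hz.eq_of_tgt _ _]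
    infer_instance
  exact @IsIso.comp_isIso _ _ _ _ _ _ _ this _

lemma isIso_desc_finOne {F : Fin 1 → A} {X : A} (v : ∀ k, F k ⟶ X) (hv : IsIso (v 0)) :
    IsIso (biproduct.desc v) := by
  haveI : IsIso (biproduct.ι F 0) := by
    refine ⟨biproduct.π F 0, by simp, ?_⟩
    apply biproduct.hom_ext
    intro j
    obtain rfl : j = 0 := Subsingleton.elim _ _
    simp
  haveI : IsIso (biproduct.ι F 0 ≫ biproduct.desc v) := by
    rw [biproduct.ι_desc]
    exact hv
  exact IsIso.of_isIso_comp_left (biproduct.ι F 0) (biproduct.desc v)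

end Auxiliary

/-- Splitting lemma: if `s ≫ f` is an isomorphism then `ker f ⊞ Y ≅ X`. -/
lemma split_iso {X Y Z : A} (f : X ⟶ Z) (s : Y ⟶ X) (hsf : IsIso (s ≫ f)) :
    IsIso (biprod.desc (kernel.ι f) s) := by
  haveI := hsf
  set r : X ⟶ Y := f ≫ inv (s ≫ f) with hr
  have hrs : r ≫ s ≫ f = f := by
    rw [hr]
    slice_lhs 2 4 => rw [show inv (s ≫ f) ≫ s ≫ f = 𝟙 _ by simp]
    simp
  have hker : (𝟙 X - r ≫ s) ≫ f = 0 := by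
    simp only [Preadditive.sub_comp, Category.id_comp, Category.assoc, hrs, sub_self]
  refine ⟨biprod.lift (kernel.lift f (𝟙 X - r ≫ s) hker) r, ?_, ?_⟩
  · apply biprod.hom_ext' <;> apply biprod.hom_ext <;>
      simp only [biprod.inl_desc_assoc, biprod.inr_desc_assoc, Category.assoc,
        biprod.lift_fst, biprod.lift_snd, Category.comp_id, Category.id_comp,
        biprod.inl_fst, biprod.inl_snd, biprod.inr_fst, biprod.inr_snd]
    · rw [← cancel_mono (kernel.ι f)]
      simp only [Category.assoc, kernel.lift_ι, Preadditive.comp_sub, Category.comp_id,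
        Category.id_comp]
      rw [hr]
      slice_lhs 2 3 => rw [kernel.condition]
      simp
    · rw [hr]
      slice_lhs 1 2 => rw [kernel.condition]
      simp
    · rw [← cancel_mono (kernel.ι f)]
      simp only [Category.assoc, kernel.lift_ι, Preadditive.comp_sub, Category.comp_id,
        zero_comp, Preadditive.comp_sub]
      have hss : s ≫ r ≫ s = s := by
        rw [hr, ← Category.assoc, ← Category.assoc, IsIso.hom_inv_id]
        simp
      rw [hss, sub_self]
    · rw [hr, ← Category.assoc, IsIso.hom_inv_id]
  · rw [biprod.lift_desc, kernel.lift_ι]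
    simp

/-- Peeling one summand off a biproduct decomposition. -/
lemma desc_cons_iso {N : ℕ} (F : Fin (N + 2) → A) (G : Fin (N + 1) → A) (P X Y : A)
    (eP : P = F 0) (e : ∀ k : Fin (N + 1), G k = F k.succ)
    (v : ∀ j : Fin (N + 2), F j ⟶ X)
    (w : ∀ k : Fin (N + 1), G k ⟶ Y) (s : Y ⟶ X) (p : P ⟶ X)
    (hv0 : eqToHom eP ≫ v 0 = p)
    (hvs : ∀ k, eqToHom (e k) ≫ v k.succ = w k ≫ s)
    (hw : IsIso (biproduct.desc w))
    (hps : IsIso (biprod.desc p s)) :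
    IsIso (biproduct.desc v) := by
  set ξ : P ⊞ (⨁ G) ⟶ ⨁ F := biprod.desc (eqToHom eP ≫ biproduct.ι F 0)
      (biproduct.desc fun k => eqToHom (e k) ≫ biproduct.ι F k.succ) with hξ
  set ζ : (⨁ F) ⟶ P ⊞ (⨁ G) := biproduct.desc (fun j =>
      Fin.cases (eqToHom eP.symm ≫ biprod.inl)
        (fun k => eqToHom (e k).symm ≫ biproduct.ι G k ≫ biprod.inr) j) with hζ
  haveI : IsIso ξ := by
    refine ⟨ζ, ?_, ?_⟩
    · rw [hξ, hζ]
      apply biprod.hom_ext'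
      · simp
      · apply biproduct.hom_ext'
        intro k
        simp
    · rw [hξ, hζ]
      apply biproduct.hom_ext'
      intro j
      induction j using Fin.cases with
      | zero => simp
      | succ k => simp
  have hfac : ξ ≫ biproduct.desc v = biprod.map (𝟙 P) (biproduct.desc w) ≫ biprod.desc p s := by
    rw [hξ]
    apply biprod.hom_ext'
    · simp [hv0]
    · apply biproduct.hom_ext'
      intro k
      simp [hvs k]
  haveI : IsIso (biprod.map (𝟙 P) (biproduct.desc w)) :=
    inferInstanceAs (IsIso (biprod.mapIso (Iso.refl P) (asIso (biproduct.desc w))).hom)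
  haveI : IsIso (ξ ≫ biproduct.desc v) := by rw [hfac]; infer_instance
  exact IsIso.of_isIso_comp_left ξ (biproduct.desc v)

/-- **Primitive decomposition in an abelian category.** Let `(H_i)_{i ∈ ℤ}` be
objects of an abelian category, zero for all but finitely many `i`, and
`η_i : H_i ⟶ H_{i+2}` morphisms such that `η^k : H_{-k} ⟶ H_k` is an
isomorphism for every `k ≥ 0`.  Then for every `i ≥ 0` and every `N` beyond
which the relevant objects vanish, the maps `η^k ∘ ι : P_{-i-2k} ⟶ H_{-i}`
(`0 ≤ k ≤ N`) exhibit `H_{-i}` as the biproduct `⨁_{k ≥ 0} P_{-i-2k}` (the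
induced morphism from the coproduct is an isomorphism), and likewise the maps
`η^{i+k} ∘ ι : P_{-i-2k} ⟶ H_i` exhibit `H_i` as `⨁_{k ≥ 0} P_{-i-2k}`. -/
theorem primitive_decomposition_abelian (H : ℤ → A)
    (hfin : {i : ℤ | ¬ IsZero (H i)}.Finite)
    (η : ∀ i : ℤ, H i ⟶ H (i + 2))
    (hHL : ∀ k : ℕ, IsIso (etaPow H η k (-(k : ℤ)) (k : ℤ) (by ring))) :
    ∀ i N : ℕ, (∀ k : ℕ, N < k → IsZero (H (-(i : ℤ) - 2 * (k : ℤ)))) →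
      IsIso (biproduct.desc (fun k : Fin (N + 1) => primToNeg H η i k))
      ∧ IsIso (biproduct.desc (fun k : Fin (N + 1) => primToPos H η i k)) := by
  suffices hneg : ∀ N i : ℕ, (∀ k : ℕ, N < k → IsZero (H (-(i : ℤ) - 2 * (k : ℤ)))) →
      IsIso (biproduct.desc (fun k : Fin (N + 1) => primToNeg H η i k)) by
    intro i N hvan
    refine ⟨hneg N i hvan, ?_⟩
    have key : (biproduct.desc (fun k : Fin (N + 1) => primToPos H η i k)) =
        (biproduct.desc fun k : Fin (N + 1) => primToNeg H η i k) ≫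
          etaPow H η i (-(i : ℤ)) (i : ℤ) (by ring) := by
      apply biproduct.hom_ext'
      intro k
      rw [biproduct.ι_desc, biproduct.ι_desc_assoc]
      unfold primToPos primToNeg
      erw [Category.assoc, etaPow_comp]
      rw [etaPow_congr H η (show (k : ℕ) + i = i + (k : ℕ) by omega) rfl rfl]
      simp
    rw [key]
    haveI := hneg N i hvan
    haveI := hHL i
    infer_instance
  intro N
  induction N with
  | zero =>
      intro i hvan
      apply isIso_desc_finOne
      have hsrc : IsZero (H (-(((i + 2 : ℕ)) : ℤ))) :=
        isZero_congr H (by push_cast; ring) (hvan 1 one_pos)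
      haveI := hHL (i + 2)
      have hpf : ((i + 2 : ℕ) : ℤ) = -((i + 2 : ℕ) : ℤ) + 2 * ((i + 2 : ℕ) : ℤ) := by ring
      have htgt : IsZero (H (((i + 2 : ℕ)) : ℤ)) :=
        hsrc.of_iso (asIso (etaPow H η (i + 2) (-((i + 2 : ℕ) : ℤ)) ((i + 2 : ℕ) : ℤ)
          hpf)).symm
      exact isIso_primToNeg_zero H η i (isZero_congr H (by push_cast; ring) htgt)
  | succ N ih =>
      intro i hvan
      have hvan' : ∀ k : ℕ, N < k → IsZero (H (-((i + 2 : ℕ) : ℤ) - 2 * (k : ℤ))) := by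
        intro k hk
        exact isZero_congr H (by push_cast; ring) (hvan (k + 1) (by omega))
      have hw := ih (i + 2) hvan'
      have hsf : IsIso (etaPow H η 1 (-((i + 2 : ℕ) : ℤ)) (-(i : ℤ)) (by push_cast; ring) ≫
          etaPow H η (i + 2 * 0 + 1) (-(i : ℤ)) (((i + 2 * 0 : ℕ) : ℤ) + 2)
            (by push_cast; ring)) := by
        rw [etaPow_comp H η 1 (i + 2 * 0 + 1)]
        rw [etaPow_congr H η (show 1 + (i + 2 * 0 + 1) = i + 2 by omega) rfl
            (show (((i + 2 * 0 : ℕ)) : ℤ) + 2 = ((i + 2 : ℕ) : ℤ) by push_cast; ring)]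
        haveI := hHL (i + 2)
        infer_instance
      have hps : IsIso (biprod.desc (primToNeg H η i 0)
          (etaPow H η 1 (-((i + 2 : ℕ) : ℤ)) (-(i : ℤ)) (by push_cast; ring))) := by
        have hp : primToNeg H η i 0 =
            kernel.ι (etaPow H η (i + 2 * 0 + 1) (-(i : ℤ))
              (((i + 2 * 0 : ℕ) : ℤ) + 2) (by push_cast; ring)) := by
          rw [primToNeg_zero_eq]
          simp
          rfl
        rw [hp]
        exact split_iso _ _ hsf
      exact desc_cons_iso
        (fun k : Fin (N + 2) => primObj H η (i + 2 * (k : ℕ)))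
        (fun k : Fin (N + 1) => primObj H η ((i + 2) + 2 * (k : ℕ)))
        (primObj H η (i + 2 * 0)) (H (-(i : ℤ))) (H (-((i + 2 : ℕ) : ℤ)))
        (congrArg (primObj H η) (by simp))
        (fun k => congrArg (primObj H η) (by rw [Fin.val_succ]; ring))
        (fun j => primToNeg H η i j)
        (fun k => primToNeg H η (i + 2) k)
        (etaPow H η 1 (-((i + 2 : ℕ) : ℤ)) (-(i : ℤ)) (by push_cast; ring))
        (primToNeg H η i 0)
        (primToNeg_congr H η i (by simp) _)
        (fun k => primToNeg_succ' H η i (k : ℕ) (Fin.val_succ k) _)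
        hw hps
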